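/- Let Γ be a subgroup of ℤ², let e₁ = (1,0), e₂ = (0,1), let α₁, α₂, α₃ : ℤ² → ℍ∖{0} be Γ-periodic functions, and let h : Γ → ℂˣ be a group homomorphism all of whose values are real (h = h̄). If there exists a nonzero holomorphic section ψ with monodromy h, then the complex vector space of all holomorphic sections with monodromy h (with ℂ acting by pointwise right multiplication) has dimension at least 2; indeed ψ and ψ·j are linearly independent over ℂ. (This underlies the statement in Lemma 4.17 that the anti-holomorphic involution ρ of the spectral curve, which covers h ↦ h̄, has no fixed points: at a point fixed by ρ the space of holomorphic sections with the corresponding monodromy cannot be complex one-dimensional.) -/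

import Mathlib

noncomputable section

/-- The quaternions. -/
abbrev H : Type := Quaternion ℝ

/-- The embedding of `ℂ` into the quaternions as the real subalgebra spanned by `1` and `i`. -/
def toH (z : ℂ) : H := ⟨z.re, z.im, 0, 0⟩

/-- The quaternion `j`. -/
def jH : H := ⟨0, 0, 1, 0⟩

/-- The lattice vector `e₁ = (1,0)`. -/
def e₁ : ℤ × ℤ := (1, 0)

/-- The lattice vector `e₂ = (0,1)`. -/
def e₂ : ℤ × ℤ := (0, 1)

/-- `ψ : ℤ² → ℍ` is a holomorphic section with monodromy `h : Γ → ℂˣ` of the quaternionic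
holomorphic line bundle over the discrete torus `ℤ²/Γ` modeled by the coefficient
functions `α₁, α₂, α₃`. -/
def IsHoloSection (Γ : AddSubgroup (ℤ × ℤ)) (α₁ α₂ α₃ : ℤ × ℤ → H)
    (h : Γ → ℂˣ) (ψ : ℤ × ℤ → H) : Prop :=
  (∀ v : ℤ × ℤ, α₁ v * ψ v + α₂ v * ψ (v + e₁) + α₃ v * ψ (v + e₂) = 0) ∧
  (∀ x : ℤ × ℤ, ∀ g : Γ, ψ (x + (g : ℤ × ℤ)) = ψ x * toH (h g))

/-- At a real monodromy (`h = h̄`), a nonzero holomorphic section `ψ` gives rise to the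
holomorphic section `ψ·j` with the same monodromy, and `ψ` and `ψ·j` are linearly
independent over `ℂ` (acting by pointwise right multiplication); hence the complex
dimension of the space of holomorphic sections is at least `2`.  This underlies the
statement in Lemma 4.17 that the involution `ρ` of the spectral curve has no fixed
points. -/
theorem real_monodromy_two_dimensional
    (Γ : AddSubgroup (ℤ × ℤ))
    (α₁ α₂ α₃ : ℤ × ℤ → H)
    (hα₁ : ∀ x, α₁ x ≠ 0) (hα₂ : ∀ x, α₂ x ≠ 0) (hα₃ : ∀ x, α₃ x ≠ 0)
    (hper₁ : ∀ x : ℤ × ℤ, ∀ g : Γ, α₁ (x + (g : ℤ × ℤ)) = α₁ x)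
    (hper₂ : ∀ x : ℤ × ℤ, ∀ g : Γ, α₂ (x + (g : ℤ × ℤ)) = α₂ x)
    (hper₃ : ∀ x : ℤ × ℤ, ∀ g : Γ, α₃ (x + (g : ℤ × ℤ)) = α₃ x)
    (h : Γ → ℂˣ) (hhom : ∀ a b : Γ, h (a + b) = h a * h b)
    (hreal : ∀ g : Γ, starRingEnd ℂ ((h g : ℂˣ) : ℂ) = ((h g : ℂˣ) : ℂ))
    (ψ : ℤ × ℤ → H) (hψ : IsHoloSection Γ α₁ α₂ α₃ h ψ) (hne : ψ ≠ 0) :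
    IsHoloSection Γ α₁ α₂ α₃ h (fun x => ψ x * jH) ∧
    ∀ a b : ℂ, (fun x => ψ x * toH a + ψ x * jH * toH b) = (fun _ => (0 : H)) →
      a = 0 ∧ b = 0 := by
  obtain ⟨heq, hmon⟩ := hψ
  constructor
  · constructor
    · intro v
      have hv := heq v
      have : α₁ v * (ψ v * jH) + α₂ v * (ψ (v + e₁) * jH) + α₃ v * (ψ (v + e₂) * jH)
          = (α₁ v * ψ v + α₂ v * ψ (v + e₁) + α₃ v * ψ (v + e₂)) * jH := by
        simp [add_mul, mul_assoc]
      rw [this, hv, zero_mul]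
    · intro x g
      have him : ((h g : ℂˣ) : ℂ).im = 0 := by
        have h1 := congrArg Complex.im (hreal g)
        simp at h1
        linarith
      have hcomm : jH * toH (h g) = toH (h g) * jH := by
        ext <;> simp only [Quaternion.re_mul, Quaternion.imI_mul, Quaternion.imJ_mul,
          Quaternion.imK_mul] <;> simp [toH, jH, him]
      simp only [hmon x g]
      rw [mul_assoc, ← hcomm, ← mul_assoc]
  · intro a b hab
    obtain ⟨x₀, hx₀⟩ : ∃ x, ψ x ≠ 0 := by
      by_contra hc
      push_neg at hc
      exact hne (funext fun x => hc x)
    have h0 : ψ x₀ * (toH a + jH * toH b) = 0 := by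
      have h1 := congrFun hab x₀
      rw [mul_add, ← mul_assoc]
      exact h1
    have hq : toH a + jH * toH b = 0 := by
      rcases mul_eq_zero.mp h0 with h' | h'
      · exact absurd h' hx₀
      · exact h'
    have hval : toH a + jH * toH b = (⟨a.re, a.im, b.re, -b.im⟩ : H) := by
      ext <;> simp only [Quaternion.re_add, Quaternion.imI_add, Quaternion.imJ_add,
        Quaternion.imK_add, Quaternion.re_mul, Quaternion.imI_mul, Quaternion.imJ_mul,
        Quaternion.imK_mul] <;> simp [toH, jH]
    rw [hval] at hq
    replace hq := Quaternion.ext_iff.mp hq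
    simp only [Quaternion.re_zero, Quaternion.imI_zero, Quaternion.imJ_zero,
      Quaternion.imK_zero, neg_eq_zero] at hq
    exact ⟨Complex.ext hq.1 hq.2.1, Complex.ext hq.2.2.1 hq.2.2.2⟩
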